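/- Let N and a be integers with a ≤ (N−1)/2 and r := 4a + 2 − N ≥ 1, and let ξ = exp(2πi/N). Define ψ_a : ℤ/Nℤ → ℂ as the function induced by the N-periodic function of the integer x given by ψ_a(x) = exp(iπ(r−1)x/N) · ∏_{k=1}^{N−2a−1} sin(π(a+k−x)/N); this function vanishes outside the discrete interval [−a,a]. Then the r functions x ↦ ξ^{−jx} ψ_a(x), for 0 ≤ j ≤ r−1, lie in C_a and form a basis of C_a. -/

import Mathlib

open Complex

/-- The (non-normalized) discrete Fourier transform on `ZMod N`:
`(dft N f) k = ∑_{j=0}^{N-1} exp(-2πi j k / N) f(j)`. -/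
noncomputable def dft (N : ℕ) (f : ZMod N → ℂ) : ZMod N → ℂ := fun k =>
  ∑ j ∈ Finset.range N,
    Complex.exp (-(2 * Real.pi * Complex.I * (j : ℂ) * (k.val : ℂ)) / (N : ℂ)) * f (j : ZMod N)

/-- The discrete interval `[-a, a]`, viewed as a subset of `ZMod N`. -/
def dInterval (N : ℕ) (a : ℤ) : Set (ZMod N) := {x | ∃ j : ℤ, |j| ≤ a ∧ (j : ZMod N) = x}

/-- The discrete Fourier transform as a linear map. -/
noncomputable def dftL (N : ℕ) : (ZMod N → ℂ) →ₗ[ℂ] (ZMod N → ℂ) where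
  toFun f := dft N f
  map_add' f g := by
    funext k
    simp only [dft, Pi.add_apply, mul_add]
    rw [Finset.sum_add_distrib]
  map_smul' c f := by
    funext k
    simp only [dft, Pi.smul_apply, smul_eq_mul, RingHom.id_apply]
    rw [Finset.mul_sum]
    exact Finset.sum_congr rfl fun j _ => by ring

/-- The subspace `L²(S)` of functions on `ZMod N` vanishing outside `S`. -/
noncomputable def supportedIn (N : ℕ) (S : Set (ZMod N)) : Submodule ℂ (ZMod N → ℂ) where
  carrier := {f | ∀ x ∉ S, f x = 0}
  add_mem' := by
    intro f g hf hg x hx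
    simp [hf x hx, hg x hx]
  zero_mem' := by
    intro x _
    rfl
  smul_mem' := by
    intro c f hf x hx
    simp [hf x hx]

/-- The space `C_a` of functions supported in `[-a,a]` whose Fourier transform is
also supported in `[-a,a]`. -/
noncomputable def Ca (N : ℕ) (a : ℤ) : Submodule ℂ (ZMod N → ℂ) :=
  supportedIn N (dInterval N a) ⊓ Submodule.comap (dftL N) (supportedIn N (dInterval N a))


/-- The primitive `N`-th root of unity `ξ = exp(2πi/N)`. -/
noncomputable def zeta (N : ℕ) : ℂ := Complex.exp (2 * Real.pi * Complex.I / (N : ℂ))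

/-- The function `ψ_a(x) = exp(iπ(r−1)x/N) ∏_{k=1}^{N−2a−1} sin(π(a+k−x)/N)`, with
`r = 4a+2−N`, as an `N`-periodic function of the integer `x`. -/
noncomputable def psiInt (N : ℕ) (a : ℤ) (x : ℤ) : ℂ :=
  Complex.exp (Complex.I * ((Real.pi * ((4 * a + 1 - (N : ℤ) : ℤ) : ℝ) * (x : ℝ) / N : ℝ) : ℂ)) *
    ∏ k ∈ Finset.range ((N : ℤ) - 2 * a - 1).toNat,
      ((Real.sin (Real.pi * ((a : ℝ) + (k + 1) - (x : ℝ)) / N) : ℝ) : ℂ)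

/-- `ψ_a` as a function on `ZMod N`. -/
noncomputable def psiZ (N : ℕ) (a : ℤ) : ZMod N → ℂ := fun x => psiInt N a (x.val : ℤ)

/-- The family `x ↦ ξ^{−jx} ψ_a(x)`. -/
noncomputable def basisFam (N : ℕ) (a : ℤ) (j : ℕ) : ZMod N → ℂ := fun x =>
  zeta N ^ (-(j : ℤ) * (x.val : ℤ)) * psiZ N a x

namespace S10
open Polynomial

noncomputable def om (N : ℕ) : ℂ := Complex.exp (Real.pi * Complex.I / N)

noncomputable def Pp (N : ℕ) (a : ℤ) : Polynomial ℂ :=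
  ∏ k ∈ Finset.range ((N : ℤ) - 2*a - 1).toNat,
    (C (zeta N ^ (a + k + 1 : ℤ)) * X - 1)

noncomputable def Cc (N : ℕ) (a : ℤ) : ℂ :=
  (2 * Complex.I)⁻¹ ^ ((N : ℤ) - 2*a - 1).toNat *
    ∏ k ∈ Finset.range ((N : ℤ) - 2*a - 1).toNat, om N ^ (-(a + (k:ℤ) + 1))

noncomputable def G (N : ℕ) (a : ℤ) (Q : Polynomial ℂ) : ZMod N → ℂ :=
  fun x => zeta N ^ (a * (x.val : ℤ)) * Q.eval (zeta N ^ (-(x.val : ℤ)))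

lemma zeta_ne_zero (N : ℕ) : zeta N ≠ 0 := Complex.exp_ne_zero _
lemma om_ne_zero (N : ℕ) : om N ≠ 0 := Complex.exp_ne_zero _

lemma om_zpow (N : ℕ) (n : ℤ) : om N ^ n = Complex.exp (n * (Real.pi * Complex.I / N)) :=
  (Complex.exp_int_mul _ n).symm

lemma zeta_zpow (N : ℕ) (n : ℤ) :
    zeta N ^ n = Complex.exp (n * (2 * Real.pi * Complex.I / N)) :=
  (Complex.exp_int_mul _ n).symm

lemma zeta_eq_om_sq (N : ℕ) : zeta N = om N * om N := by
  rw [zeta, om, ← Complex.exp_add]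
  ring_nf

lemma zeta_zpow_eq_om_zpow (N : ℕ) (n : ℤ) : zeta N ^ n = om N ^ n * om N ^ n := by
  rw [zeta_eq_om_sq, mul_zpow]

lemma prim (N : ℕ) (hN : 0 < N) : IsPrimitiveRoot (zeta N) N := by
  have := Complex.isPrimitiveRoot_exp N hN.ne'
  rwa [zeta]

lemma zeta_zpow_eq_one_iff (N : ℕ) (hN : 0 < N) (c : ℤ) :
    zeta N ^ c = 1 ↔ (N : ℤ) ∣ c :=
  (prim N hN).zpow_eq_one_iff_dvd c

lemma zeta_pow_N (N : ℕ) (hN : 0 < N) : zeta N ^ (N : ℤ) = 1 :=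
  (zeta_zpow_eq_one_iff N hN N).2 dvd_rfl

lemma sum_zeta (N : ℕ) (hN : 0 < N) (c : ℤ) :
    ∑ j ∈ Finset.range N, zeta N ^ (c * (j : ℤ)) = if (N : ℤ) ∣ c then (N : ℂ) else 0 := by
  have h1 : ∀ j ∈ Finset.range N, zeta N ^ (c * (j : ℤ)) = (zeta N ^ c) ^ j := by
    intro j _
    rw [zpow_mul, zpow_natCast]
  rw [Finset.sum_congr rfl h1]
  split_ifs with h
  · have : zeta N ^ c = 1 := (zeta_zpow_eq_one_iff N hN c).2 h
    simp [this]
  · have hne : zeta N ^ c ≠ 1 := fun hc => h ((zeta_zpow_eq_one_iff N hN c).1 hc)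
    have hNth : (zeta N ^ c) ^ N = 1 := by
      rw [← zpow_natCast (zeta N ^ c), ← zpow_mul, mul_comm, zpow_mul, zeta_pow_N N hN, one_zpow]
    rw [geom_sum_eq hne, hNth]
    simp

lemma sin_factor (N : ℕ) (s : ℤ) :
    ((Real.sin (Real.pi * (s : ℝ) / N) : ℝ) : ℂ)
      = (2 * Complex.I)⁻¹ * om N ^ (-s) * (zeta N ^ s - 1) := by
  rw [Complex.ofReal_sin]
  have harg : ((Real.pi * (s : ℝ) / N : ℝ) : ℂ) * Complex.I
      = (s : ℂ) * (Real.pi * Complex.I / N) := by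
    push_cast
    ring
  have h1 : Complex.exp (((Real.pi * (s : ℝ) / N : ℝ) : ℂ) * Complex.I) = om N ^ s := by
    rw [harg, ← om_zpow]
  have h2 : Complex.exp (-((Real.pi * (s : ℝ) / N : ℝ) : ℂ) * Complex.I) = om N ^ (-s) := by
    rw [om_zpow]
    congr 1
    push_cast
    ring
  rw [Complex.sin, h1, h2, zeta_zpow_eq_om_zpow]
  have hu : om N ^ s ≠ 0 := zpow_ne_zero _ (om_ne_zero N)
  have hinv : om N ^ (-s) = (om N ^ s)⁻¹ := zpow_neg _ _
  rw [hinv]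
  field_simp
  ring_nf
  rw [Complex.I_sq]
  ring

end S10
namespace S10
open Polynomial

lemma psi_formula (N : ℕ) (a : ℤ) (h1 : 2 * a + 1 ≤ (N : ℤ)) (x : ℤ) :
    psiInt N a x = Cc N a * (zeta N ^ (a * x) * (Pp N a).eval (zeta N ^ (-x))) := by
  set m := ((N : ℤ) - 2 * a - 1).toNat with hmdef
  have hm : (m : ℤ) = (N : ℤ) - 2 * a - 1 := Int.toNat_of_nonneg (by omega)
  have hfac : ∀ k ∈ Finset.range m,
      ((Real.sin (Real.pi * ((a : ℝ) + ((k : ℝ) + 1) - (x : ℝ)) / N) : ℝ) : ℂ)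
        = ((2 * Complex.I)⁻¹ * om N ^ (-(a + (k : ℤ) + 1))) * (om N ^ x)
            * (zeta N ^ (a + (k : ℤ) + 1) * zeta N ^ (-x) - 1) := by
    intro k _
    have h0 : Real.pi * ((a : ℝ) + ((k : ℝ) + 1) - (x : ℝ)) / N
        = Real.pi * (((a + (k : ℤ) + 1 - x : ℤ)) : ℝ) / N := by push_cast; ring
    rw [h0, sin_factor]
    rw [show -(a + (k : ℤ) + 1 - x) = -(a + (k : ℤ) + 1) + x from by ring,
        zpow_add₀ (om_ne_zero N),
        show a + (k : ℤ) + 1 - x = (a + (k : ℤ) + 1) + (-x) from by ring,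
        zpow_add₀ (zeta_ne_zero N)]
    ring
  have hpref : Complex.exp (Complex.I *
        ((Real.pi * (((4 * a + 1 - (N : ℤ) : ℤ)) : ℝ) * (x : ℝ) / N : ℝ) : ℂ))
      = om N ^ ((4 * a + 1 - (N : ℤ)) * x) := by
    rw [om_zpow]
    congr 1
    push_cast
    ring
  have heval : (Pp N a).eval (zeta N ^ (-x))
      = ∏ k ∈ Finset.range m, (zeta N ^ (a + (k : ℤ) + 1) * zeta N ^ (-x) - 1) := by
    simp only [Pp, eval_prod, eval_sub, eval_mul, eval_C, eval_X, eval_one]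
    rfl
  have hompow : (om N ^ x) ^ m = om N ^ (x * (m : ℤ)) := by
    rw [← zpow_natCast (om N ^ x), ← zpow_mul]
  have hcomb : om N ^ ((4 * a + 1 - (N : ℤ)) * x) * om N ^ (x * (m : ℤ))
      = zeta N ^ (a * x) := by
    rw [zeta_zpow_eq_om_zpow, ← zpow_add₀ (om_ne_zero N), ← zpow_add₀ (om_ne_zero N)]
    congr 1
    rw [hm]
    ring
  simp only [psiInt]
  rw [Finset.prod_congr rfl hfac, Finset.prod_mul_distrib, Finset.prod_mul_distrib,
      Finset.prod_mul_distrib, Finset.prod_const, Finset.prod_const, Finset.card_range,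
      hpref, hompow, heval, Cc, ← hmdef, ← hcomb]
  ring

end S10
namespace S10
open Polynomial

lemma psiZ_eq (N : ℕ) (a : ℤ) (h1 : 2 * a + 1 ≤ (N : ℤ)) (x : ZMod N) :
    psiZ N a x = Cc N a * G N a (Pp N a) x := by
  rw [psiZ, psi_formula N a h1, G]

lemma basisFam_eq (N : ℕ) (a : ℤ) (h1 : 2 * a + 1 ≤ (N : ℤ)) (j : ℕ) (x : ZMod N) :
    basisFam N a j x = Cc N a * G N a (X ^ j * Pp N a) x := by
  rw [basisFam, psiZ_eq N a h1, G, G, eval_mul, eval_pow, eval_X]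
  rw [show (zeta N ^ (-(x.val : ℤ))) ^ j = zeta N ^ (-(j : ℤ) * (x.val : ℤ)) from by
    rw [← zpow_natCast (zeta N ^ (-(x.val : ℤ))), ← zpow_mul]; ring_nf]
  ring

lemma a_nonneg (N : ℕ) (a : ℤ) (hr : 1 ≤ 4 * a + 2 - (N : ℤ)) (hN : 0 < N) : 0 ≤ a := by
  have h : (1 : ℤ) ≤ (N : ℤ) := by exact_mod_cast hN
  omega

lemma mem_dInterval_iff (N : ℕ) (a : ℤ) (hN : 0 < N) (h1 : 2 * a + 1 ≤ (N : ℤ))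
    (ha : 0 ≤ a) (x : ZMod N) :
    x ∈ dInterval N a ↔ ((x.val : ℤ) ≤ a ∨ (N : ℤ) - a ≤ (x.val : ℤ)) := by
  haveI : NeZero N := ⟨hN.ne'⟩
  have hvlt : (x.val : ℤ) < N := by exact_mod_cast x.val_lt
  have hv0 : (0 : ℤ) ≤ (x.val : ℤ) := Int.natCast_nonneg _
  constructor
  · rintro ⟨j, hj, hjx⟩
    rw [abs_le] at hj
    have hx : ((x.val : ℕ) : ZMod N) = x := ZMod.natCast_rightInverse x
    have hcast : ((j - (x.val : ℤ)) : ℤ) = (0 : ZMod N) → (N : ℤ) ∣ j - (x.val : ℤ) :=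
      fun h => (ZMod.intCast_zmod_eq_zero_iff_dvd _ N).1 h
    have hz : ((j - (x.val : ℤ) : ℤ) : ZMod N) = 0 := by
      push_cast
      rw [hjx, ZMod.natCast_val, ZMod.cast_id]
      ring
    obtain ⟨q, hq⟩ := hcast hz
    have hq0 : q = 0 ∨ q = -1 := by
      have hNz : (0 : ℤ) < (N : ℤ) := by exact_mod_cast hN
      by_contra hcon
      push_neg at hcon
      rcases lt_or_ge q 0 with h' | h'
      · have : q ≤ -2 := by omega
        nlinarith
      · have : 1 ≤ q := by omega
        nlinarith
    rcases hq0 with rfl | rfl <;> omega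
  · intro h
    rcases h with h | h
    · exact ⟨(x.val : ℤ), by rw [abs_of_nonneg hv0]; exact h, by
        push_cast; rw [ZMod.natCast_val, ZMod.cast_id]⟩
    · refine ⟨(x.val : ℤ) - N, by rw [abs_of_nonpos (by omega)]; omega, ?_⟩
      push_cast
      rw [ZMod.natCast_val, ZMod.cast_id, ZMod.natCast_self]
      ring

lemma not_mem_dInterval_iff (N : ℕ) (a : ℤ) (hN : 0 < N) (h1 : 2 * a + 1 ≤ (N : ℤ))
    (ha : 0 ≤ a) (x : ZMod N) :
    x ∉ dInterval N a ↔ (a < (x.val : ℤ) ∧ (x.val : ℤ) < (N : ℤ) - a) := by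
  rw [mem_dInterval_iff N a hN h1 ha]
  omega

lemma Pp_eval_root (N : ℕ) (a : ℤ) (h1 : 2 * a + 1 ≤ (N : ℤ)) (v : ℤ)
    (hv1 : a < v) (hv2 : v < (N : ℤ) - a) :
    (Pp N a).eval (zeta N ^ (-v)) = 0 := by
  set m := ((N : ℤ) - 2 * a - 1).toNat with hmdef
  have hm : (m : ℤ) = (N : ℤ) - 2 * a - 1 := Int.toNat_of_nonneg (by omega)
  rw [Pp, eval_prod, ← hmdef]
  refine Finset.prod_eq_zero (i := (v - a - 1).toNat) (Finset.mem_range.2 ?_) ?_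
  · omega
  · have hk : (((v - a - 1).toNat : ℤ)) = v - a - 1 := Int.toNat_of_nonneg (by omega)
    simp only [eval_sub, eval_mul, eval_C, eval_X, eval_one]
    rw [hk, ← zpow_add₀ (zeta_ne_zero N)]
    rw [show a + (v - a - 1) + 1 + -v = 0 from by ring, zpow_zero, sub_self]

lemma G_mul_Pp_eq_zero (N : ℕ) (a : ℤ) (hN : 0 < N) (h1 : 2 * a + 1 ≤ (N : ℤ))
    (ha : 0 ≤ a) (Q : Polynomial ℂ) (x : ZMod N) (hx : x ∉ dInterval N a) :
    G N a (Q * Pp N a) x = 0 := by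
  rw [not_mem_dInterval_iff N a hN h1 ha] at hx
  rw [G, eval_mul, Pp_eval_root N a h1 (x.val : ℤ) hx.1 hx.2, mul_zero, mul_zero]

end S10
namespace S10
open Polynomial

lemma exp_dft_term (N : ℕ) (j k : ℕ) :
    Complex.exp (-(2 * Real.pi * Complex.I * (j : ℂ) * (k : ℂ)) / (N : ℂ))
      = zeta N ^ (-((j : ℤ) * (k : ℤ))) := by
  rw [zeta_zpow]
  congr 1
  push_cast
  ring

lemma dft_const_mul (N : ℕ) (c : ℂ) (g : ZMod N → ℂ) (k : ZMod N) :
    dft N (fun x => c * g x) k = c * dft N g k := by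
  simp only [dft, Finset.mul_sum]
  exact Finset.sum_congr rfl fun j _ => by ring

lemma dft_G_eq_zero (N : ℕ) (a : ℤ) (hN : 0 < N) (h1 : 2 * a + 1 ≤ (N : ℤ)) (ha : 0 ≤ a)
    (Q : Polynomial ℂ) (hQ : Q.natDegree < 2 * a.toNat + 1)
    (k : ZMod N) (hk : k ∉ dInterval N a) : dft N (G N a Q) k = 0 := by
  haveI hnz : NeZero N := ⟨hN.ne'⟩
  have hA : ((a.toNat : ℤ)) = a := Int.toNat_of_nonneg ha
  have hterm : ∀ j ∈ Finset.range N,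
      Complex.exp (-(2 * Real.pi * Complex.I * (j : ℂ) * (k.val : ℂ)) / (N : ℂ))
          * G N a Q ((j : ℕ) : ZMod N)
        = ∑ t ∈ Finset.range (2 * a.toNat + 1),
            Q.coeff t * zeta N ^ ((a - t - (k.val : ℤ)) * (j : ℤ)) := by
    intro j hj
    have hjv : (((j : ℕ) : ZMod N)).val = j := ZMod.val_cast_of_lt (Finset.mem_range.1 hj)
    rw [exp_dft_term, G, hjv, eval_eq_sum_range' hQ, Finset.mul_sum, Finset.mul_sum]
    refine Finset.sum_congr rfl fun t ht => ?_
    rw [show (zeta N ^ (-(j : ℤ))) ^ t = zeta N ^ (-(j : ℤ) * (t : ℤ)) from by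
      rw [← zpow_natCast (zeta N ^ (-(j : ℤ))), ← zpow_mul]]
    rw [show (a - (t : ℤ) - (k.val : ℤ)) * (j : ℤ)
        = -((j : ℤ) * (k.val : ℤ)) + (a * (j : ℤ) + -(j : ℤ) * (t : ℤ)) from by ring,
      zpow_add₀ (zeta_ne_zero N), zpow_add₀ (zeta_ne_zero N)]
    ring
  rw [dft]
  rw [Finset.sum_congr rfl hterm, Finset.sum_comm]
  refine Finset.sum_eq_zero fun t ht => ?_
  rw [← Finset.mul_sum, sum_zeta N hN (a - t - (k.val : ℤ))]
  rw [if_neg, mul_zero]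
  intro hdvd
  apply hk
  refine ⟨a - t, ?_, ?_⟩
  · rw [abs_le]
    have ht' := Finset.mem_range.1 ht
    omega
  · have h0 : ((a - t - (k.val : ℤ) : ℤ) : ZMod N) = 0 :=
      (ZMod.intCast_zmod_eq_zero_iff_dvd _ N).2 hdvd
    have h2 : ((a - (t : ℤ) : ℤ) : ZMod N) = ((k.val : ℤ) : ZMod N) := by
      rw [← sub_eq_zero]
      push_cast at h0 ⊢
      linear_combination h0
    rw [h2]
    push_cast
    rw [ZMod.natCast_val, ZMod.cast_id]

lemma inversion (N : ℕ) (hN : 0 < N) (f : ZMod N → ℂ) (x : ZMod N) :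
    f x = (N : ℂ)⁻¹ * ∑ k ∈ Finset.range N,
      zeta N ^ ((k : ℤ) * (x.val : ℤ)) * dft N f ((k : ℕ) : ZMod N) := by
  haveI : NeZero N := ⟨hN.ne'⟩
  have hterm : ∀ k ∈ Finset.range N,
      zeta N ^ ((k : ℤ) * (x.val : ℤ)) * dft N f ((k : ℕ) : ZMod N)
        = ∑ j ∈ Finset.range N, zeta N ^ (((x.val : ℤ) - j) * (k : ℤ)) * f ((j : ℕ) : ZMod N) := by
    intro k hk
    have hkv : (((k : ℕ) : ZMod N)).val = k := ZMod.val_cast_of_lt (Finset.mem_range.1 hk)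
    rw [dft, hkv, Finset.mul_sum]
    refine Finset.sum_congr rfl fun j hj => ?_
    rw [exp_dft_term, ← mul_assoc, ← zpow_add₀ (zeta_ne_zero N),
      show (k : ℤ) * (x.val : ℤ) + -((j : ℤ) * (k : ℤ)) = ((x.val : ℤ) - j) * (k : ℤ) from by ring]
  rw [Finset.sum_congr rfl hterm, Finset.sum_comm]
  have hsum : ∀ j ∈ Finset.range N,
      (∑ k ∈ Finset.range N, zeta N ^ (((x.val : ℤ) - j) * (k : ℤ)) * f ((j : ℕ) : ZMod N))
        = (if j = x.val then (N : ℂ) else 0) * f ((j : ℕ) : ZMod N) := by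
    intro j hj
    rw [← Finset.sum_mul, sum_zeta N hN]
    congr 1
    have hjN := Finset.mem_range.1 hj
    have hvN := x.val_lt
    have hiff : (N : ℤ) ∣ ((x.val : ℤ) - j) ↔ j = x.val := by
      constructor
      · intro hd
        have h0 := Int.eq_zero_of_abs_lt_dvd hd (by rw [abs_lt]; constructor <;> omega)
        omega
      · rintro rfl
        simp
    rw [if_congr hiff rfl rfl]
  rw [Finset.sum_congr rfl hsum, Finset.sum_eq_single x.val]
  · rw [if_pos rfl, ZMod.natCast_val, ZMod.cast_id, ← mul_assoc, inv_mul_cancel₀, one_mul]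
    exact_mod_cast hN.ne'
  · intro b _ hb
    rw [if_neg hb, zero_mul]
  · intro hx
    exact absurd (Finset.mem_range.2 x.val_lt) hx

end S10
namespace S10
open Polynomial

lemma prod_X_sub_C_dvd (m : ℕ) (v : ℕ → ℂ)
    (hinj : ∀ i < m, ∀ j < m, v i = v j → i = j) :
    ∀ Q : Polynomial ℂ, (∀ i < m, Q.eval (v i) = 0) →
      (∏ i ∈ Finset.range m, (X - C (v i))) ∣ Q := by
  induction m with
  | zero => intro Q _; simp
  | succ n ih =>
    intro Q hv
    have h1 : (X - C (v n)) ∣ Q := dvd_iff_isRoot.2 (hv n (Nat.lt_succ_self n))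
    obtain ⟨Q1, hQ1⟩ := h1
    have hroots : ∀ i < n, Q1.eval (v i) = 0 := by
      intro i hi
      have h := hv i (hi.trans (Nat.lt_succ_self n))
      rw [hQ1, eval_mul, eval_sub, eval_X, eval_C, mul_eq_zero] at h
      rcases h with h | h
      · exact absurd (hinj i (hi.trans (Nat.lt_succ_self n)) n (Nat.lt_succ_self n)
          (sub_eq_zero.1 h)) (by omega)
      · exact h
    have hd := ih (fun i hi j hj hij =>
      hinj i (hi.trans (Nat.lt_succ_self n)) j (hj.trans (Nat.lt_succ_self n)) hij) Q1 hroots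
    rw [Finset.prod_range_succ, hQ1, mul_comm (X - C (v n)) Q1]
    exact mul_dvd_mul hd dvd_rfl

lemma Pp_factor (N : ℕ) (a : ℤ) :
    Pp N a = C (∏ k ∈ Finset.range ((N : ℤ) - 2*a - 1).toNat, zeta N ^ (a + (k:ℤ) + 1)) *
      ∏ k ∈ Finset.range ((N : ℤ) - 2*a - 1).toNat, (X - C (zeta N ^ (-(a + (k:ℤ) + 1)))) := by
  rw [map_prod, ← Finset.prod_mul_distrib, Pp]
  refine Finset.prod_congr rfl fun k _ => ?_
  rw [mul_sub, ← C_mul, ← zpow_add₀ (zeta_ne_zero N),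
    show (a + (k:ℤ) + 1) + -(a + (k:ℤ) + 1) = 0 from by ring, zpow_zero, map_one]

lemma Pp_ne_zero (N : ℕ) (a : ℤ) : Pp N a ≠ 0 := by
  rw [Pp_factor]
  refine mul_ne_zero ?_ ?_
  · rw [Ne, C_eq_zero]
    exact Finset.prod_ne_zero_iff.2 fun k _ => zpow_ne_zero _ (zeta_ne_zero N)
  · exact Finset.prod_ne_zero_iff.2 fun k _ => X_sub_C_ne_zero _

lemma Pp_natDegree (N : ℕ) (a : ℤ) :
    (Pp N a).natDegree = ((N : ℤ) - 2*a - 1).toNat := by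
  rw [Pp_factor, natDegree_mul, natDegree_C, natDegree_prod _ _ fun k _ => X_sub_C_ne_zero _]
  · simp [natDegree_X_sub_C]
  · rw [Ne, C_eq_zero]
    exact Finset.prod_ne_zero_iff.2 fun k _ => zpow_ne_zero _ (zeta_ne_zero N)
  · exact Finset.prod_ne_zero_iff.2 fun k _ => X_sub_C_ne_zero _

lemma Cc_ne_zero (N : ℕ) (a : ℤ) : Cc N a ≠ 0 := by
  refine mul_ne_zero (pow_ne_zero _ (inv_ne_zero (by
    simpa using Complex.I_ne_zero))) ?_
  exact Finset.prod_ne_zero_iff.2 fun k _ => zpow_ne_zero _ (om_ne_zero N)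

lemma zeta_zpow_eq_of_dvd (N : ℕ) (hN : 0 < N) (u v : ℤ) (h : (N : ℤ) ∣ u - v) :
    zeta N ^ u = zeta N ^ v := by
  have h1 : zeta N ^ (u - v) = 1 := (zeta_zpow_eq_one_iff N hN _).2 h
  calc zeta N ^ u = zeta N ^ (u - v) * zeta N ^ v := by
        rw [← zpow_add₀ (zeta_ne_zero N)]
        congr 1
        ring
    _ = zeta N ^ v := by rw [h1, one_mul]

lemma zeta_zpow_inj (N : ℕ) (hN : 0 < N) (u v : ℤ) (hu : |u - v| < N)
    (h : zeta N ^ u = zeta N ^ v) : u = v := by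
  have : zeta N ^ (u - v) = 1 := by
    rw [sub_eq_add_neg, zpow_add₀ (zeta_ne_zero N), h, zpow_neg,
      mul_inv_cancel₀ (zpow_ne_zero _ (zeta_ne_zero N))]
  have hdvd := (zeta_zpow_eq_one_iff N hN _).1 this
  have := Int.eq_zero_of_abs_lt_dvd hdvd hu
  omega

end S10
namespace S10
open Polynomial

lemma mem_Ca_iff (N : ℕ) (a : ℤ) (f : ZMod N → ℂ) :
    f ∈ Ca N a ↔ (∀ x ∉ dInterval N a, f x = 0) ∧ (∀ x ∉ dInterval N a, dft N f x = 0) := by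
  rw [Ca, Submodule.mem_inf, Submodule.mem_comap]
  exact Iff.rfl

lemma mem_span (N : ℕ) (a : ℤ) (hN : 0 < N) (h1 : 2 * a + 1 ≤ (N : ℤ))
    (hr : 1 ≤ 4 * a + 2 - (N : ℤ)) (f : ZMod N → ℂ)
    (hf1 : ∀ x ∉ dInterval N a, f x = 0) (hf2 : ∀ x ∉ dInterval N a, dft N f x = 0) :
    f ∈ Submodule.span ℂ
      (Set.range (fun j : Fin (4 * a + 2 - (N : ℤ)).toNat => basisFam N a j)) := by
  haveI : NeZero N := ⟨hN.ne'⟩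
  have ha : 0 ≤ a := a_nonneg N a hr hN
  set A := a.toNat with hAdef
  have hA : (A : ℤ) = a := Int.toNat_of_nonneg ha
  set m := ((N : ℤ) - 2 * a - 1).toNat with hmdef
  have hm : (m : ℤ) = (N : ℤ) - 2 * a - 1 := Int.toNat_of_nonneg (by omega)
  set r := (4 * a + 2 - (N : ℤ)).toNat with hrdef
  have hrz : (r : ℤ) = 4 * a + 2 - (N : ℤ) := Int.toNat_of_nonneg (by omega)
  set e : ℕ → ℕ := fun k => if k ≤ A then A - k else A + N - k with hedef
  set Q : Polynomial ℂ :=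
    ∑ k ∈ Finset.range N, C (dft N f ((k : ℕ) : ZMod N) / N) * X ^ (e k) with hQdef
  have hgood : ∀ k : ℕ, k < N → dft N f ((k : ℕ) : ZMod N) ≠ 0 →
      ((k : ℤ) ≤ a ∨ (N : ℤ) - a ≤ (k : ℤ)) := by
    intro k hk hne
    by_contra hcon
    push_neg at hcon
    apply hne
    apply hf2
    rw [not_mem_dInterval_iff N a hN h1 ha, ZMod.val_cast_of_lt hk]
    omega
  have hQdeg : Q.natDegree ≤ 2 * A := by
    refine natDegree_sum_le_of_forall_le _ _ fun k hk => ?_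
    by_cases h0 : dft N f ((k : ℕ) : ZMod N) = 0
    · rw [h0]
      simp
    · refine (natDegree_C_mul_X_pow_le _ _).trans ?_
      have hg := hgood k (Finset.mem_range.1 hk) h0
      rw [hedef]
      dsimp only
      split_ifs with hle <;> omega
  have hfG : ∀ x : ZMod N, f x = G N a Q x := by
    intro x
    rw [inversion N hN f x, Finset.mul_sum, G, hQdef, eval_finset_sum, Finset.mul_sum]
    refine Finset.sum_congr rfl fun k hk => ?_
    by_cases h0 : dft N f ((k : ℕ) : ZMod N) = 0
    · rw [h0]
      simp
    · have hg := hgood k (Finset.mem_range.1 hk) h0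
      have hW : eval (zeta N ^ (-(x.val : ℤ))) (C (dft N f ((k : ℕ) : ZMod N) / N) * X ^ (e k))
          = (dft N f ((k : ℕ) : ZMod N) / N) * zeta N ^ ((-(x.val : ℤ)) * (e k : ℤ)) := by
        rw [eval_mul, eval_C, eval_pow, eval_X, ← zpow_natCast (zeta N ^ (-(x.val : ℤ))),
          ← zpow_mul]
      rw [hW]
      have hexp : zeta N ^ (a * (x.val : ℤ) + (-(x.val : ℤ)) * (e k : ℤ))
          = zeta N ^ ((k : ℤ) * (x.val : ℤ)) := by
        by_cases hle : k ≤ A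
        · have he : ((e k : ℕ) : ℤ) = a - k := by
            rw [hedef]
            dsimp only
            rw [if_pos hle]
            omega
          rw [he]
          congr 1
          ring
        · have hge : (N : ℤ) - a ≤ (k : ℤ) := by
            rcases hg with h | h
            · omega
            · exact h
          have he : ((e k : ℕ) : ℤ) = a + N - k := by
            rw [hedef]
            dsimp only
            rw [if_neg hle]
            have : k < N := Finset.mem_range.1 hk
            omega
          rw [he]
          refine zeta_zpow_eq_of_dvd N hN _ _ ?_
          exact ⟨-(x.val : ℤ), by ring⟩
      rw [show zeta N ^ (a * (x.val : ℤ)) *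
            ((dft N f ((k : ℕ) : ZMod N) / N) * zeta N ^ ((-(x.val : ℤ)) * (e k : ℤ)))
          = (zeta N ^ (a * (x.val : ℤ)) * zeta N ^ ((-(x.val : ℤ)) * (e k : ℤ)))
              * (dft N f ((k : ℕ) : ZMod N) / N) from by ring,
        ← zpow_add₀ (zeta_ne_zero N), hexp, div_eq_mul_inv]
      ring
  have hQroot : ∀ k : ℕ, k < m → Q.eval (zeta N ^ (-(a + (k : ℤ) + 1))) = 0 := by
    intro k hk
    have hkm : ((k : ℤ)) < (m : ℤ) := by exact_mod_cast hk
    set v : ℕ := A + 1 + k with hvdef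
    have hvN : v < N := by omega
    have hx : (((v : ℕ) : ZMod N)).val = v := ZMod.val_cast_of_lt hvN
    have hnot : ((v : ℕ) : ZMod N) ∉ dInterval N a := by
      rw [not_mem_dInterval_iff N a hN h1 ha, hx]
      omega
    have h0 := hf1 _ hnot
    rw [hfG, G, hx] at h0
    have h2 := (mul_eq_zero.1 h0).resolve_left (zpow_ne_zero _ (zeta_ne_zero N))
    rw [show -(a + (k : ℤ) + 1) = -((v : ℕ) : ℤ) from by omega]
    exact h2
  have hinj : ∀ i < m, ∀ j < m,
      zeta N ^ (-(a + (i : ℤ) + 1)) = zeta N ^ (-(a + (j : ℤ) + 1)) → i = j := by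
    intro i hi j hj hij
    have hi' : ((i : ℤ)) < m := by exact_mod_cast hi
    have hj' : ((j : ℤ)) < m := by exact_mod_cast hj
    have := zeta_zpow_inj N hN _ _ (by rw [abs_lt]; constructor <;> omega) hij
    omega
  obtain ⟨S0, hS0⟩ := prod_X_sub_C_dvd m (fun k => zeta N ^ (-(a + (k : ℤ) + 1))) hinj Q hQroot
  set u := ∏ k ∈ Finset.range m, zeta N ^ (a + (k : ℤ) + 1) with hudef
  have hu : u ≠ 0 := Finset.prod_ne_zero_iff.2 fun k _ => zpow_ne_zero _ (zeta_ne_zero N)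
  have hPf : Pp N a = C u * ∏ k ∈ Finset.range m, (X - C (zeta N ^ (-(a + (k : ℤ) + 1)))) := by
    rw [Pp_factor, ← hmdef, hudef]
  set S := C u⁻¹ * S0 with hSdef
  have hQPS : Q = Pp N a * S := by
    have step : Pp N a * S = (C u * C u⁻¹) *
        ((∏ k ∈ Finset.range m, (X - C (zeta N ^ (-(a + (k : ℤ) + 1))))) * S0) := by
      rw [hPf, hSdef]
      ring
    rw [step, ← C_mul, mul_inv_cancel₀ hu, map_one, one_mul, ← hS0]
  by_cases hS : S = 0
  · have hf0 : f = 0 := by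
      funext x
      rw [hfG, hQPS, hS, mul_zero, G]
      simp
    rw [hf0]
    exact Submodule.zero_mem _
  · have hdegS : S.natDegree < r := by
      have hdq : Q.natDegree = (Pp N a).natDegree + S.natDegree := by
        rw [hQPS, natDegree_mul (Pp_ne_zero N a) hS]
      have hPd : (Pp N a).natDegree = m := by rw [Pp_natDegree, ← hmdef]
      omega
    have hfsum : f = ∑ j ∈ Finset.range r, (S.coeff j / Cc N a) • basisFam N a j := by
      funext x
      rw [Finset.sum_apply]
      have hterm : ∀ j ∈ Finset.range r, ((S.coeff j / Cc N a) • basisFam N a j) x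
          = S.coeff j * G N a (X ^ j * Pp N a) x := by
        intro j _
        rw [Pi.smul_apply, smul_eq_mul, basisFam_eq N a h1 j x]
        field_simp
        rw [mul_right_comm (S.coeff j), mul_div_assoc, div_self (Cc_ne_zero N a), mul_one]
      rw [Finset.sum_congr rfl hterm, hfG x, hQPS]
      simp only [G, eval_mul, eval_pow, eval_X]
      rw [eval_eq_sum_range' hdegS, Finset.mul_sum, Finset.mul_sum]
      exact Finset.sum_congr rfl fun j _ => by ring
    rw [hfsum]
    refine Submodule.sum_mem _ fun j hj => Submodule.smul_mem _ _ (Submodule.subset_span ?_)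
    exact ⟨⟨j, Finset.mem_range.1 hj⟩, rfl⟩

end S10
theorem statement10 (N : ℕ) (hN : 0 < N) (a : ℤ) (h1 : 2 * a + 1 ≤ (N : ℤ))
    (hr : 1 ≤ 4 * a + 2 - (N : ℤ)) :
    (∀ x : ZMod N, x ∉ dInterval N a → psiZ N a x = 0) ∧
    (∀ j : Fin (4 * a + 2 - (N : ℤ)).toNat, basisFam N a j ∈ Ca N a) ∧
    LinearIndependent ℂ (fun j : Fin (4 * a + 2 - (N : ℤ)).toNat => basisFam N a j) ∧
    Submodule.span ℂ
        (Set.range (fun j : Fin (4 * a + 2 - (N : ℤ)).toNat => basisFam N a j))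
      = Ca N a := by
  classical
  open Polynomial S10 in
  haveI : NeZero N := ⟨hN.ne'⟩
  have ha : 0 ≤ a := S10.a_nonneg N a hr hN
  set A := a.toNat with hAdef
  have hA : (A : ℤ) = a := Int.toNat_of_nonneg ha
  set m := ((N : ℤ) - 2 * a - 1).toNat with hmdef
  have hm : (m : ℤ) = (N : ℤ) - 2 * a - 1 := Int.toNat_of_nonneg (by omega)
  set r := (4 * a + 2 - (N : ℤ)).toNat with hrdef
  have hrz : (r : ℤ) = 4 * a + 2 - (N : ℤ) := Int.toNat_of_nonneg (by omega)
  -- membership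
  have hmem : ∀ j : ℕ, j < r → basisFam N a j ∈ Ca N a := by
    intro j hj
    have hfun : basisFam N a j = fun x => Cc N a * G N a (X ^ j * Pp N a) x :=
      funext (basisFam_eq N a h1 j)
    rw [mem_Ca_iff]
    constructor
    · intro x hx
      rw [basisFam_eq N a h1 j x, G_mul_Pp_eq_zero N a hN h1 ha (X ^ j) x hx, mul_zero]
    · intro k hk
      rw [hfun, dft_const_mul]
      have hdeg : (X ^ j * Pp N a).natDegree < 2 * A + 1 := by
        rw [natDegree_mul (pow_ne_zero j X_ne_zero) (Pp_ne_zero N a), natDegree_X_pow,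
          Pp_natDegree, ← hmdef]
        omega
      rw [dft_G_eq_zero N a hN h1 ha _ hdeg k hk, mul_zero]
  -- linear independence
  have hind : LinearIndependent ℂ (fun j : Fin r => basisFam N a (j : ℕ)) := by
    rw [Fintype.linearIndependent_iff]
    intro c hc i
    set c' : ℕ → ℂ := fun j => if h : j < r then c ⟨j, h⟩ else 0 with hc'def
    set T : Polynomial ℂ := ∑ j ∈ Finset.range r, C (c' j) * X ^ j with hTdef
    have hcx : ∀ x : ZMod N,
        ∑ j ∈ Finset.range r, c' j * basisFam N a j x = 0 := by
      intro x
      have h0 := congrFun hc x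
      rw [Finset.sum_apply] at h0
      simp only [Pi.zero_apply] at h0
      rw [← Fin.sum_univ_eq_sum_range (fun j => c' j * basisFam N a j x) r]
      rw [← h0]
      refine Finset.sum_congr rfl fun i _ => ?_
      rw [Pi.smul_apply, smul_eq_mul, hc'def]
      simp [i.isLt]
    have hpoly : ∀ v : ℕ, v < N → (T * Pp N a).eval (zeta N ^ (-(v : ℤ))) = 0 := by
      intro v hv
      have hval : (((v : ℕ) : ZMod N)).val = v := ZMod.val_cast_of_lt hv
      have hx := hcx ((v : ℕ) : ZMod N)
      rw [show (∑ j ∈ Finset.range r, c' j * basisFam N a j ((v : ℕ) : ZMod N))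
          = Cc N a * (zeta N ^ (a * (v : ℤ)) *
              (T * Pp N a).eval (zeta N ^ (-(v : ℤ)))) from ?_] at hx
      · have h2 := (mul_eq_zero.1 hx).resolve_left (Cc_ne_zero N a)
        exact (mul_eq_zero.1 h2).resolve_left (zpow_ne_zero _ (zeta_ne_zero N))
      · rw [eval_mul, hTdef, eval_finset_sum, Finset.sum_mul, Finset.mul_sum,
          Finset.mul_sum]
        refine Finset.sum_congr rfl fun j _ => ?_
        rw [basisFam_eq N a h1 j, G, hval]
        simp only [eval_mul, eval_pow, eval_X, eval_C]
        ring
    have hTdeg : T.natDegree < r := by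
      have h1' : T.natDegree ≤ r - 1 := by
        refine natDegree_sum_le_of_forall_le _ _ fun j hj => ?_
        refine (natDegree_C_mul_X_pow_le _ _).trans ?_
        have := Finset.mem_range.1 hj
        omega
      omega
    have hWdvd := prod_X_sub_C_dvd N (fun v => zeta N ^ (-(v : ℤ)))
      (fun i hi j hj hij => by
        have hi' : ((i : ℤ)) < N := by exact_mod_cast hi
        have hj' : ((j : ℤ)) < N := by exact_mod_cast hj
        have := zeta_zpow_inj N hN _ _ (by rw [abs_lt]; constructor <;> omega) hij
        omega)
      (T * Pp N a) (fun v hv => hpoly v hv)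
    have hTP0 : T * Pp N a = 0 := by
      by_contra h0
      have hle := natDegree_le_of_dvd hWdvd h0
      have hWdeg : (∏ v ∈ Finset.range N, (X - C (zeta N ^ (-(v : ℤ))))).natDegree = N := by
        rw [natDegree_prod _ _ fun v _ => X_sub_C_ne_zero _]
        simp [natDegree_X_sub_C]
      have hmul := natDegree_mul_le (p := T) (q := Pp N a)
      have hPd : (Pp N a).natDegree = m := by rw [Pp_natDegree, ← hmdef]
      omega
    have hT0 : T = 0 := (mul_eq_zero.1 hTP0).resolve_right (Pp_ne_zero N a)
    have hcoeff : T.coeff (i : ℕ) = c' (i : ℕ) := by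
      rw [hTdef, finset_sum_coeff]
      rw [Finset.sum_eq_single (i : ℕ)]
      · rw [coeff_C_mul, coeff_X_pow, if_pos rfl, mul_one]
      · intro b _ hb
        rw [coeff_C_mul, coeff_X_pow, if_neg (fun h => hb h.symm), mul_zero]
      · intro hni
        exact absurd (Finset.mem_range.2 i.isLt) hni
    have : c' (i : ℕ) = 0 := by rw [← hcoeff, hT0, coeff_zero]
    rw [hc'def] at this
    simpa [i.isLt] using this
  refine ⟨?_, fun j => hmem (j : ℕ) j.isLt, hind, ?_⟩
  · intro x hx
    have h0 := G_mul_Pp_eq_zero N a hN h1 ha 1 x hx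
    rw [one_mul] at h0
    rw [psiZ_eq N a h1 x, h0, mul_zero]
  · apply le_antisymm
    · rw [Submodule.span_le]
      rintro g ⟨j, rfl⟩
      exact hmem (j : ℕ) j.isLt
    · intro f hf
      rw [mem_Ca_iff] at hf
      exact mem_span N a hN h1 hr f hf.1 hf.2
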